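/- If a $b\times b$ submatrix $M$ of a matrix over a commutative ring has two of its rows contained in a submatrix $Z$ all of whose $2\times 2$ minors lie in an ideal $J$, then $\det(M) \in J$. More precisely: if $M$ is a $b \times b$ matrix with $b \ge 2$ and all $2\times 2$ minors formed from two fixed rows of $M$ lie in an ideal $J$, then $\det(M) \in J$ (by Laplace/generalized Laplace expansion along those two rows). -/

import Mathlib

open Finset Matrix

private lemma det_updateRow_linear {R : Type*} [CommRing R] {n : Type*} [DecidableEq n]
    [Fintype n] (A : Matrix n n R) (r : n) (c : n → R) (u : n → n → R) (s : Finset n) :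
    (A.updateRow r (∑ j ∈ s, c j • u j)).det = ∑ j ∈ s, c j * (A.updateRow r (u j)).det := by
  classical
  induction s using Finset.induction_on with
  | empty =>
      simp only [Finset.sum_empty]
      exact Matrix.det_eq_zero_of_row_eq_zero r (by simp)
  | @insert _ _ hk ih =>
      rw [Finset.sum_insert hk, Matrix.det_updateRow_add, Matrix.det_updateRow_smul, ih,
        Finset.sum_insert hk]

private lemma det_row_expand {R : Type*} [CommRing R] {n : Type*} [DecidableEq n]
    [Fintype n] (A : Matrix n n R) (r : n) :
    A.det = ∑ j, A r j * (A.updateRow r (Pi.single j 1)).det := by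
  classical
  have hrow : (∑ j, A r j • (Pi.single j 1 : n → R)) = A r := by
    funext k
    simp [Pi.single_apply]
  rw [← det_updateRow_linear A r (A r) (fun j => Pi.single j 1) Finset.univ, hrow,
    Matrix.updateRow_eq_self]

theorem det_mem_of_two_rows_minors_mem {R : Type*} [CommRing R] (J : Ideal R) (b : ℕ)
    (hb : 2 ≤ b) (M : Matrix (Fin b) (Fin b) R) (p q : Fin b) (hpq : p ≠ q)
    (h : ∀ j j' : Fin b, M p j * M q j' - M p j' * M q j ∈ J) :
    M.det ∈ J := by
  classical
  set D : Fin b → Fin b → R := fun j j' =>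
    ((M.updateRow p (Pi.single j 1)).updateRow q (Pi.single j' 1)).det with hD
  -- antisymmetry of D
  have hDskew : ∀ j j', D j' j = - D j j' := by
    intro j j'
    have hswap : (M.updateRow p (Pi.single j' 1)).updateRow q (Pi.single j 1)
        = fun i => ((M.updateRow p (Pi.single j 1)).updateRow q (Pi.single j' 1))
            (Equiv.swap p q i) := by
      funext i k
      rcases eq_or_ne i p with rfl | hip
      · simp [Matrix.updateRow_apply, hpq, hpq.symm, Equiv.swap_apply_left]
      rcases eq_or_ne i q with rfl | hiq
      · simp [Matrix.updateRow_apply, hpq, hpq.symm, Equiv.swap_apply_right]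
      · simp [Matrix.updateRow_apply, hip, hiq, Equiv.swap_apply_of_ne_of_ne hip hiq]
    have := Matrix.det_permute (Equiv.swap p q)
      ((M.updateRow p (Pi.single j 1)).updateRow q (Pi.single j' 1))
    rw [Equiv.Perm.sign_swap hpq] at this
    simp only [hD]
    rw [hswap]
    simp at this
    exact this
  have hDdiag : ∀ j, D j j = 0 := fun j =>
    Matrix.det_zero_of_row_eq hpq (by simp [hpq, hpq.symm])
  -- expansion of det M
  have hexp : M.det = ∑ j, ∑ j', M p j * M q j' * D j j' := by
    rw [det_row_expand M p]
    refine Finset.sum_congr rfl fun j _ => ?_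
    rw [det_row_expand (M.updateRow p (Pi.single j 1)) q, Finset.mul_sum]
    refine Finset.sum_congr rfl fun j' _ => ?_
    rw [Matrix.updateRow_ne hpq.symm]
    ring_nf
    rfl
  rw [hexp, ← Finset.sum_product']
  set f : Fin b × Fin b → R := fun x => M p x.1 * M q x.2 * D x.1 x.2 with hf
  have h1 : ∑ x ∈ (Finset.univ ×ˢ Finset.univ : Finset (Fin b × Fin b)).filter
        (fun x => ¬ x.1 < x.2), f x
      = ∑ x ∈ (Finset.univ ×ˢ Finset.univ : Finset (Fin b × Fin b)).filter
        (fun x => x.2 < x.1), f x := by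
    refine (Finset.sum_subset ?_ ?_).symm
    · intro x hx
      simp only [Finset.mem_filter] at hx ⊢
      exact ⟨hx.1, asymm hx.2⟩
    · intro x hx hx'
      simp only [Finset.mem_filter, not_and, not_lt] at hx hx'
      have : x.1 = x.2 := le_antisymm (hx' hx.1) hx.2
      simp [hf, this, hDdiag]
  have h2 : ∑ x ∈ (Finset.univ ×ˢ Finset.univ : Finset (Fin b × Fin b)).filter
        (fun x => x.2 < x.1), f x
      = ∑ x ∈ (Finset.univ ×ˢ Finset.univ : Finset (Fin b × Fin b)).filter
        (fun x => x.1 < x.2), f x.swap := by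
    refine Finset.sum_nbij' (fun x => x.swap) (fun x => x.swap) ?_ ?_ ?_ ?_ ?_ <;>
      simp [Finset.mem_filter]
  rw [← Finset.sum_filter_add_sum_filter_not (Finset.univ ×ˢ Finset.univ)
    (fun x => x.1 < x.2) f, h1, h2, ← Finset.sum_add_distrib]
  refine Ideal.sum_mem _ fun x hx => ?_
  have : f x + f x.swap = (M p x.1 * M q x.2 - M p x.2 * M q x.1) * D x.1 x.2 := by
    simp only [hf, Prod.fst_swap, Prod.snd_swap, hDskew x.2 x.1]
    ring
  rw [this]
  exact J.mul_mem_right _ (h x.1 x.2)
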